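/- Let Δ ∈ (0, 1], q ≥ 1 a real number, x₀ ∈ ℝ, and let h : ℝ → ℝ be continuous with Δ-sliding average φ, so that φ'(x₀) = (h(x₀ + Δ/2) − h(x₀ − Δ/2))/Δ. Let a ∈ ℝ and suppose ũ, φ̂₊, φ̂₋ ∈ ℝ satisfy |ũ − a| ≤ C₁·Δ^q, |φ̂₊ − h(x₀ + Δ/2)| ≤ C₂·Δ^q, and |φ̂₋ − h(x₀ − Δ/2)| ≤ C₂·Δ^q. Then |ũ·(φ̂₊ − φ̂₋)/Δ − a·φ'(x₀)| ≤ (2C₂·(|a| + C₁) + C₁·|φ'(x₀)|)·Δ^{q−1}. -/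

import Mathlib

/-- (Accuracy of the non-conservative scalar scheme, Algorithm 6.) Let
`Δ ∈ (0,1]`, `q ≥ 1` real, `x₀ ∈ ℝ`, and let `h : ℝ → ℝ` be continuous with `Δ`-sliding
average `φ`, so that `φ'(x₀) = (h(x₀+Δ/2) − h(x₀−Δ/2))/Δ`. If `|ũ − a| ≤ C₁ Δ^q`,
`|φ̂₊ − h(x₀+Δ/2)| ≤ C₂ Δ^q` and `|φ̂₋ − h(x₀−Δ/2)| ≤ C₂ Δ^q`, then
`|ũ·(φ̂₊ − φ̂₋)/Δ − a·φ'(x₀)| ≤ (2C₂(|a| + C₁) + C₁|φ'(x₀)|)·Δ^(q−1)`. -/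
theorem scalar_scheme_accuracy (Δ : ℝ) (hΔ : 0 < Δ) (hΔ1 : Δ ≤ 1) (q : ℝ) (hq : 1 ≤ q)
    (x₀ : ℝ) (h : ℝ → ℝ) (hh : Continuous h)
    (φ : ℝ → ℝ) (hφ : ∀ x, φ x = (1 / Δ) * ∫ s in (x - Δ / 2)..(x + Δ / 2), h s)
    (a C₁ C₂ ut φp φm : ℝ)
    (hut : |ut - a| ≤ C₁ * Δ ^ q)
    (hφp : |φp - h (x₀ + Δ / 2)| ≤ C₂ * Δ ^ q)
    (hφm : |φm - h (x₀ - Δ / 2)| ≤ C₂ * Δ ^ q) :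
    deriv φ x₀ = (h (x₀ + Δ / 2) - h (x₀ - Δ / 2)) / Δ ∧
      |ut * (φp - φm) / Δ - a * deriv φ x₀| ≤
        (2 * C₂ * (|a| + C₁) + C₁ * |deriv φ x₀|) * Δ ^ (q - 1) := by
  -- antiderivative
  set F : ℝ → ℝ := fun x => ∫ s in (0:ℝ)..x, h s with hF
  have hFd : ∀ x : ℝ, HasDerivAt F (h x) x := fun x =>
    intervalIntegral.integral_hasDerivAt_right (hh.intervalIntegrable _ _)
      hh.stronglyMeasurable.stronglyMeasurableAtFilter hh.continuousAt
  have hφeq : ∀ x, φ x = (1 / Δ) * (F (x + Δ / 2) - F (x - Δ / 2)) := by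
    intro x
    rw [hφ x]
    congr 1
    have h1 : IntervalIntegrable h MeasureTheory.volume 0 (x - Δ/2) := hh.intervalIntegrable _ _
    have h2 : IntervalIntegrable h MeasureTheory.volume (x - Δ/2) (x + Δ/2) := hh.intervalIntegrable _ _
    have := intervalIntegral.integral_add_adjacent_intervals h1 h2
    simp only [hF]
    linarith [this]
  have hder : HasDerivAt φ ((h (x₀ + Δ / 2) - h (x₀ - Δ / 2)) / Δ) x₀ := by
    have h1 : HasDerivAt (fun x => F (x + Δ / 2)) (h (x₀ + Δ / 2)) x₀ := by
      have := (hFd (x₀ + Δ / 2)).comp x₀ ((hasDerivAt_id x₀).add_const (Δ / 2))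
      simpa [Function.comp_def] using this
    have h2 : HasDerivAt (fun x => F (x - Δ / 2)) (h (x₀ - Δ / 2)) x₀ := by
      have := (hFd (x₀ - Δ / 2)).comp x₀ ((hasDerivAt_id x₀).sub_const (Δ / 2))
      simpa [Function.comp_def] using this
    have h3 := ((h1.sub h2).const_mul (1 / Δ))
    have : (1 / Δ) * (h (x₀ + Δ / 2) - h (x₀ - Δ / 2)) = (h (x₀ + Δ / 2) - h (x₀ - Δ / 2)) / Δ := by
      ring
    rw [this] at h3
    exact h3.congr_of_eventuallyEq (Filter.Eventually.of_forall fun x => (hφeq x))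
  have hderiv : deriv φ x₀ = (h (x₀ + Δ / 2) - h (x₀ - Δ / 2)) / Δ := hder.deriv
  refine ⟨hderiv, ?_⟩
  set A := h (x₀ + Δ / 2)
  set B := h (x₀ - Δ / 2)
  set d := deriv φ x₀
  have hΔq : (0:ℝ) < Δ ^ q := Real.rpow_pos_of_pos hΔ q
  have hC₁ : 0 ≤ C₁ := nonneg_of_mul_nonneg_right (by rw [mul_comm]; exact le_trans (abs_nonneg _) hut) hΔq
  have hC₂ : 0 ≤ C₂ := nonneg_of_mul_nonneg_right (by rw [mul_comm]; exact le_trans (abs_nonneg _) hφp) hΔq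
  have hΔq1 : Δ ^ q ≤ Δ ^ (q - 1) :=
    Real.rpow_le_rpow_of_exponent_ge hΔ hΔ1 (by linarith)
  have hΔql : Δ ^ q ≤ 1 := Real.rpow_le_one (le_of_lt hΔ) hΔ1 (by linarith)
  have hΔqd : Δ ^ q / Δ = Δ ^ (q - 1) := by
    rw [Real.rpow_sub hΔ, Real.rpow_one]
  have hut' : |ut| ≤ |a| + C₁ := by
    have := abs_sub_abs_le_abs_sub ut a
    nlinarith [abs_nonneg (ut - a)]
  have key : ut * (φp - φm) / Δ - a * d =
      ut * ((φp - A) - (φm - B)) / Δ + (ut - a) * d := by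
    rw [hderiv]
    field_simp
    ring
  rw [key]
  have b1 : |ut * ((φp - A) - (φm - B)) / Δ| ≤ (|a| + C₁) * (2 * C₂ * Δ ^ q) / Δ := by
    rw [abs_div, abs_mul, abs_of_pos hΔ]
    have hsub : |(φp - A) - (φm - B)| ≤ 2 * C₂ * Δ ^ q := by
      calc |(φp - A) - (φm - B)| ≤ |φp - A| + |φm - B| := abs_sub _ _
        _ ≤ C₂ * Δ ^ q + C₂ * Δ ^ q := add_le_add hφp hφm
        _ = 2 * C₂ * Δ ^ q := by ring
    have := mul_le_mul hut' hsub (abs_nonneg _) (by positivity : (0:ℝ) ≤ |a| + C₁)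
    gcongr
  have b2 : |(ut - a) * d| ≤ C₁ * Δ ^ q * |d| := by
    rw [abs_mul]
    exact mul_le_mul_of_nonneg_right hut (abs_nonneg _)
  calc |ut * ((φp - A) - (φm - B)) / Δ + (ut - a) * d|
      ≤ |ut * ((φp - A) - (φm - B)) / Δ| + |(ut - a) * d| := abs_add_le _ _
    _ ≤ (|a| + C₁) * (2 * C₂ * Δ ^ q) / Δ + C₁ * Δ ^ q * |d| := add_le_add b1 b2
    _ = 2 * C₂ * (|a| + C₁) * Δ ^ (q - 1) + C₁ * |d| * Δ ^ q := by
        rw [← hΔqd]; ring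
    _ ≤ 2 * C₂ * (|a| + C₁) * Δ ^ (q - 1) + C₁ * |d| * Δ ^ (q - 1) := by
        have : 0 ≤ C₁ * |d| := by positivity
        nlinarith
    _ = (2 * C₂ * (|a| + C₁) + C₁ * |d|) * Δ ^ (q - 1) := by ring
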